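/- Let K ≥ 1 and N ≥ 1 be integers, let r be a real number with 1 ≤ r ≤ K, and let a_1, …, a_K be nonnegative real numbers satisfying ∑_{j=1}^K a_j = N and ∑_{j=1}^K j·a_j = r·N. Then ∑_{j=1}^K (a_j/N)·(K−j)/(K·j) ≥ (K−r)/(K·r). -/

import Mathlib

/-- Let `K ≥ 1` and `N ≥ 1` be integers, `r` a real number with
`1 ≤ r ≤ K`, and `a 1, …, a K` nonnegative reals with `∑ a j = N` and `∑ j * a j = r * N`.
Then `∑ (a j / N) * (K - j)/(K * j) ≥ (K - r)/(K * r)`. -/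
theorem cdc_converse_integer_envelope
    (K N : ℕ) (hK : 1 ≤ K) (hN : 1 ≤ N)
    (r : ℝ) (hr1 : 1 ≤ r) (hrK : r ≤ K)
    (a : ℕ → ℝ) (ha : ∀ j ∈ Finset.Icc 1 K, 0 ≤ a j)
    (hsum : ∑ j ∈ Finset.Icc 1 K, a j = N)
    (hrsum : ∑ j ∈ Finset.Icc 1 K, (j : ℝ) * a j = r * N) :
    ∑ j ∈ Finset.Icc 1 K, (a j / N) * (((K : ℝ) - j) / (K * j)) ≥
      ((K : ℝ) - r) / (K * r) := by
  have hNpos : (0 : ℝ) < N := by exact_mod_cast hN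
  have hKpos : (0 : ℝ) < K := by exact_mod_cast hK
  have hrpos : (0 : ℝ) < r := lt_of_lt_of_le one_pos hr1
  set p : ℕ → ℝ := fun j => a j / N with hp
  have hp1 : ∑ j ∈ Finset.Icc 1 K, p j = 1 := by
    rw [hp, ← Finset.sum_div, hsum, div_self hNpos.ne']
  have hpr : ∑ j ∈ Finset.Icc 1 K, (j : ℝ) * p j = r := by
    simp only [hp, mul_div_assoc']
    rw [← Finset.sum_div, hrsum, mul_div_assoc, div_self hNpos.ne', mul_one]
  have hjpos : ∀ j ∈ Finset.Icc 1 K, (0 : ℝ) < j := by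
    intro j hj
    have := (Finset.mem_Icc.mp hj).1
    exact_mod_cast this
  have hpnn : ∀ j ∈ Finset.Icc 1 K, 0 ≤ p j :=
    fun j hj => div_nonneg (ha j hj) hNpos.le
  -- Cauchy–Schwarz: 1 = (∑ p)^2 ≤ (∑ p/j) * (∑ j p)
  have hCS : (∑ j ∈ Finset.Icc 1 K, p j) ^ 2 ≤
      (∑ j ∈ Finset.Icc 1 K, p j / j) * ∑ j ∈ Finset.Icc 1 K, (j : ℝ) * p j := by
    refine Finset.sum_sq_le_sum_mul_sum_of_sq_eq_mul _ ?_ ?_ ?_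
    · exact fun j hj => div_nonneg (hpnn j hj) (hjpos j hj).le
    · exact fun j hj => mul_nonneg (hjpos j hj).le (hpnn j hj)
    · intro j hj
      have hj0 : (j : ℝ) ≠ 0 := (hjpos j hj).ne'
      field_simp
  rw [hp1, hpr, one_pow] at hCS
  have hS : ∑ j ∈ Finset.Icc 1 K, p j / j ≥ 1 / r := by
    rw [ge_iff_le, div_le_iff₀ hrpos]
    linarith
  have hsplit : ∑ j ∈ Finset.Icc 1 K, (a j / N) * (((K : ℝ) - j) / (K * j)) =
      (∑ j ∈ Finset.Icc 1 K, p j / j) - 1 / K := by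
    have : ∀ j ∈ Finset.Icc 1 K, (a j / N) * (((K : ℝ) - j) / (K * j)) =
        p j / j - p j / K := by
      intro j hj
      have hj0 : (j : ℝ) ≠ 0 := (hjpos j hj).ne'
      rw [hp]
      field_simp
    rw [Finset.sum_congr rfl this, Finset.sum_sub_distrib, ← Finset.sum_div, hp1]
  rw [hsplit]
  have hRHS : ((K : ℝ) - r) / (K * r) = 1 / r - 1 / K := by
    rw [div_sub_div _ _ hrpos.ne' hKpos.ne']
    ring_nf
  rw [hRHS]
  linarith
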